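/- For every even integer p ≥ 2 there is a constant C_p > 0 with the following property. Let n, m ≥ 1, k ≥ 1, and B ≥ 1 be natural numbers, and let A ∈ ℝ^{n×m} be a matrix whose entries are integers with |A_{ij}| ≤ 2^B for all i, j. If rank(A) > k, then every matrix G ∈ ℝ^{n×m} with rank(G) ≤ k satisfies ‖A − G‖_p^p ≥ (n·m)^{−C_p·k} · 2^{−C_p·k·B}. -/

import Mathlib

open Matrix

section AuxLemmas

/-- From a family spanning a space of dimension at least `s`, one can select `s`
linearly independent members. -/
lemma aux_comp_linearIndependent {ι : Type*} [Fintype ι] {V : Type*} [AddCommGroup V]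
    [Module ℝ V] (v : ι → V) (s : ℕ)
    (h : s ≤ Module.finrank ℝ (Submodule.span ℝ (Set.range v))) :
    ∃ φ : Fin s → ι, LinearIndependent ℝ (v ∘ φ) := by
  classical
  obtain ⟨b, hb, hspan, hind⟩ := exists_linearIndependent ℝ (Set.range v)
  have hbfin : b.Finite := (Set.finite_range v).subset hb
  haveI : Fintype b := hbfin.fintype
  have hcard : Fintype.card b = Module.finrank ℝ (Submodule.span ℝ b) := by
    have h2 := linearIndependent_iff_card_eq_finrank_span.mp hind
    rwa [Subtype.range_coe, Set.finrank] at h2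
  have hs : Fintype.card (Fin s) ≤ Fintype.card b := by
    rw [Fintype.card_fin, hcard, hspan]; exact h
  obtain ⟨ψ⟩ := Function.Embedding.nonempty_of_card_le hs
  have hsel : ∀ x : b, ∃ j : ι, v j = (x : V) := fun x => hb x.2
  choose φ0 hφ0 using hsel
  refine ⟨fun i => φ0 (ψ i), ?_⟩
  have heq : (v ∘ fun i => φ0 (ψ i)) = (fun x : b => (x : V)) ∘ ψ := by
    funext i; simp [Function.comp, hφ0]
  rw [heq]
  exact hind.comp ψ ψ.injective

/-- A matrix of rank at least `s` has a nonzero `s × s` minor. -/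
lemma exists_nonzero_minor {n m s : ℕ} (A : Matrix (Fin n) (Fin m) ℝ) (h : s ≤ A.rank) :
    ∃ (r : Fin s → Fin n) (c : Fin s → Fin m), (A.submatrix r c).det ≠ 0 := by
  have h1 : s ≤ Module.finrank ℝ (Submodule.span ℝ (Set.range Aᵀ)) := by
    have h3 := Matrix.rank_eq_finrank_span_row Aᵀ
    rw [Matrix.rank_transpose] at h3
    rw [h3] at h; exact h
  obtain ⟨c, hc⟩ := aux_comp_linearIndependent Aᵀ s h1
  have hB : (A.submatrix id c).rank = s := by
    have hli : LinearIndependent ℝ (fun j => (A.submatrix id c)ᵀ j) := hc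
    have h2 : ((A.submatrix id c)ᵀ).rank = s := by
      exact (LinearIndependent.rank_matrix (M := (A.submatrix id c)ᵀ) hli).trans (Fintype.card_fin s)
    rwa [Matrix.rank_transpose] at h2
  have h2 : s ≤ Module.finrank ℝ (Submodule.span ℝ (Set.range (A.submatrix id c))) := by
    have h3 := Matrix.rank_eq_finrank_span_row (A.submatrix id c)
    rw [hB] at h3; exact h3.le
  obtain ⟨r, hr⟩ := aux_comp_linearIndependent (A.submatrix id c) s h2
  refine ⟨r, c, ?_⟩
  have hli : LinearIndependent ℝ (fun i => (A.submatrix r c) i) := hr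
  have hu : IsUnit (A.submatrix r c) := Matrix.linearIndependent_rows_iff_isUnit.mp hli
  exact fun hdet => (((Matrix.isUnit_iff_isUnit_det _).mp hu).ne_zero) hdet

/-- Rank of an arbitrary submatrix is at most the rank. -/
lemma rank_submatrix_le' {n m s : ℕ} (G : Matrix (Fin n) (Fin m) ℝ)
    (r : Fin s → Fin n) (c : Fin s → Fin m) : (G.submatrix r c).rank ≤ G.rank := by
  classical
  have hrepr : G.submatrix r c =
      ((1 : Matrix (Fin n) (Fin n) ℝ).submatrix r id) * G *
        ((1 : Matrix (Fin m) (Fin m) ℝ).submatrix id c) := by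
    ext i j
    simp [Matrix.mul_apply, Matrix.one_apply, Finset.sum_ite_eq, Finset.sum_ite_eq']
  rw [hrepr]
  exact le_trans (Matrix.rank_mul_le_left _ _) (Matrix.rank_mul_le_right _ _)

lemma aux_abs_prod_le {ι : Type*} (t : Finset ι) (g : ι → ℝ) (a : ℝ)
    (hg : ∀ i ∈ t, |g i| ≤ a) : |∏ i ∈ t, g i| ≤ a ^ t.card := by
  rw [Finset.abs_prod]
  calc ∏ i ∈ t, |g i| ≤ ∏ i ∈ t, a := Finset.prod_le_prod (fun i _ => abs_nonneg _) hg
  _ = a ^ t.card := by rw [Finset.prod_const]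

lemma aux_abs_prod_sub_prod_le {ι : Type*} (a : ℝ) (ha : 1 ≤ a) (f g : ι → ℝ) (t : Finset ι) :
    (∀ i ∈ t, |f i| ≤ a) → (∀ i ∈ t, |g i| ≤ a) →
    |∏ i ∈ t, f i - ∏ i ∈ t, g i| ≤ (∑ i ∈ t, |f i - g i|) * a ^ t.card := by
  classical
  have ha0 : (0:ℝ) ≤ a := le_trans zero_le_one ha
  induction t using Finset.induction_on with
  | empty => intro _ _; simp
  | @insert i t' hi ih =>
    intro hf hg
    have hf' : ∀ j ∈ t', |f j| ≤ a := fun j hj => hf j (Finset.mem_insert_of_mem hj)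
    have hg' : ∀ j ∈ t', |g j| ≤ a := fun j hj => hg j (Finset.mem_insert_of_mem hj)
    have IH := ih hf' hg'
    rw [Finset.prod_insert hi, Finset.prod_insert hi, Finset.sum_insert hi,
      Finset.card_insert_of_notMem hi]
    have key : f i * ∏ j ∈ t', f j - g i * ∏ j ∈ t', g j
        = f i * (∏ j ∈ t', f j - ∏ j ∈ t', g j) + (f i - g i) * ∏ j ∈ t', g j := by ring
    rw [key]
    have h1 : |f i * (∏ j ∈ t', f j - ∏ j ∈ t', g j)|
        ≤ a * ((∑ j ∈ t', |f j - g j|) * a ^ t'.card) := by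
      rw [abs_mul]
      exact mul_le_mul (hf i (Finset.mem_insert_self _ _)) IH (abs_nonneg _) ha0
    have h2 : |(f i - g i) * ∏ j ∈ t', g j| ≤ |f i - g i| * a ^ t'.card := by
      rw [abs_mul]
      exact mul_le_mul_of_nonneg_left (aux_abs_prod_le t' g a hg') (abs_nonneg _)
    have hpow : a ^ t'.card ≤ a ^ (t'.card + 1) :=
      pow_le_pow_right₀ ha (Nat.le_succ _)
    calc |f i * (∏ j ∈ t', f j - ∏ j ∈ t', g j) + (f i - g i) * ∏ j ∈ t', g j|
        ≤ |f i * (∏ j ∈ t', f j - ∏ j ∈ t', g j)| + |(f i - g i) * ∏ j ∈ t', g j| :=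
          abs_add_le _ _
      _ ≤ a * ((∑ j ∈ t', |f j - g j|) * a ^ t'.card) + |f i - g i| * a ^ t'.card :=
          add_le_add h1 h2
      _ ≤ (∑ j ∈ t', |f j - g j|) * a ^ (t'.card + 1) + |f i - g i| * a ^ (t'.card + 1) := by
          have e1 : a * ((∑ j ∈ t', |f j - g j|) * a ^ t'.card)
              = (∑ j ∈ t', |f j - g j|) * a ^ (t'.card + 1) := by ring
          rw [e1]
          have : |f i - g i| * a ^ t'.card ≤ |f i - g i| * a ^ (t'.card + 1) :=
            mul_le_mul_of_nonneg_left hpow (abs_nonneg _)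
          linarith
      _ = (|f i - g i| + ∑ j ∈ t', |f j - g j|) * a ^ (t'.card + 1) := by ring

/-- Determinant perturbation bound. -/
lemma aux_abs_det_sub_det_le {s : ℕ} (M N : Matrix (Fin s) (Fin s) ℝ) (a : ℝ) (ha : 1 ≤ a)
    (hM : ∀ i j, |M i j| ≤ a) (hN : ∀ i j, |N i j| ≤ a) :
    |M.det - N.det| ≤ (Nat.factorial s : ℝ) *
      ((∑ x : Fin s × Fin s, |M x.1 x.2 - N x.1 x.2|) * a ^ s) := by
  classical
  set T := ∑ x : Fin s × Fin s, |M x.1 x.2 - N x.1 x.2| with hT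
  have habs : ∀ σ : Equiv.Perm (Fin s), |(∏ i, M (σ i) i) - ∏ i, N (σ i) i| ≤ T * a ^ s := by
    intro σ
    have h1 := aux_abs_prod_sub_prod_le a ha (fun i => M (σ i) i) (fun i => N (σ i) i)
      Finset.univ (fun i _ => hM _ _) (fun i _ => hN _ _)
    rw [Finset.card_univ, Fintype.card_fin] at h1
    refine h1.trans ?_
    refine mul_le_mul_of_nonneg_right ?_ (by positivity)
    have hemb : Function.Injective (fun i : Fin s => ((σ i), i)) := by
      intro x y hxy
      simpa using congrArg Prod.snd hxy
    have heq : ∑ i : Fin s, |M (σ i) i - N (σ i) i|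
        = ∑ x ∈ Finset.univ.map ⟨fun i : Fin s => ((σ i), i), hemb⟩,
            |M x.1 x.2 - N x.1 x.2| := by
      rw [Finset.sum_map]
      rfl
    rw [hT, heq]
    exact Finset.sum_le_sum_of_subset_of_nonneg (Finset.subset_univ _)
      (fun _ _ _ => abs_nonneg _)
  have hdet : M.det - N.det = ∑ σ : Equiv.Perm (Fin s),
      ((Equiv.Perm.sign σ : ℤ) : ℝ) * ((∏ i, M (σ i) i) - ∏ i, N (σ i) i) := by
    rw [Matrix.det_apply', Matrix.det_apply', ← Finset.sum_sub_distrib]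
    refine Finset.sum_congr rfl fun σ _ => ?_
    ring
  rw [hdet]
  calc |∑ σ : Equiv.Perm (Fin s),
        ((Equiv.Perm.sign σ : ℤ) : ℝ) * ((∏ i, M (σ i) i) - ∏ i, N (σ i) i)|
      ≤ ∑ σ : Equiv.Perm (Fin s),
        |((Equiv.Perm.sign σ : ℤ) : ℝ) * ((∏ i, M (σ i) i) - ∏ i, N (σ i) i)| :=
        Finset.abs_sum_le_sum_abs _ _
    _ ≤ ∑ _σ : Equiv.Perm (Fin s), T * a ^ s := by
        refine Finset.sum_le_sum fun σ _ => ?_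
        rw [abs_mul]
        have hsign : |((Equiv.Perm.sign σ : ℤ) : ℝ)| = 1 := by
          rcases Int.units_eq_one_or (Equiv.Perm.sign σ) with h | h <;> simp [h]
        rw [hsign, one_mul]
        exact habs σ
    _ = (Nat.factorial s : ℝ) * (T * a ^ s) := by
        rw [Finset.sum_const, Finset.card_univ, Fintype.card_perm, Fintype.card_fin,
          nsmul_eq_mul]

/-- A nonzero determinant of an integer matrix has absolute value at least `1`. -/
lemma aux_one_le_abs_det {s : ℕ} (M : Matrix (Fin s) (Fin s) ℝ)
    (hint : ∀ i j, ∃ z : ℤ, M i j = (z : ℝ)) (hdet : M.det ≠ 0) : 1 ≤ |M.det| := by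
  classical
  choose Z hZ using hint
  have hMZ : M = (Matrix.of Z).map (fun z : ℤ => (z : ℝ)) := by
    ext i j; simp [hZ]
  have hmap := RingHom.map_det (Int.castRingHom ℝ) (Matrix.of Z)
  have hdet2 : M.det = (((Matrix.of Z).det : ℤ) : ℝ) := by
    rw [hMZ]
    exact hmap.symm
  rw [hdet2] at hdet ⊢
  have hz : (Matrix.of Z).det ≠ 0 := by exact_mod_cast hdet
  have : (1 : ℤ) ≤ |(Matrix.of Z).det| := Int.one_le_abs hz
  calc (1:ℝ) = ((1:ℤ) : ℝ) := by norm_num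
    _ ≤ ((|(Matrix.of Z).det| : ℤ) : ℝ) := by exact_mod_cast this
    _ = |(((Matrix.of Z).det : ℤ) : ℝ)| := by push_cast; ring

end AuxLemmas

/-- **Lower bound on the optimal rank-`k` ℓ_p approximation error for bounded-bit
matrices.**  For every even `p ≥ 2` there is `C_p > 0` such that any integer matrix `A`
with entries of magnitude at most `2^B` and rank greater than `k` satisfies
`‖A − G‖_p^p ≥ (nm)^{−C_p·k}·2^{−C_p·k·B}` for every matrix `G` of rank at most `k`. -/
theorem opt_lower_bound_rank_k (p : ℕ) (hpe : Even p) (hp : 2 ≤ p) :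
    ∃ C : ℝ, 0 < C ∧
      ∀ (n m k B : ℕ), 1 ≤ n → 1 ≤ m → 1 ≤ k → 1 ≤ B →
      ∀ A : Matrix (Fin n) (Fin m) ℝ,
        (∀ i j, ∃ z : ℤ, A i j = (z : ℝ)) →
        (∀ i j, |A i j| ≤ 2 ^ B) →
        k < A.rank →
        ∀ G : Matrix (Fin n) (Fin m) ℝ, G.rank ≤ k →
          ((n * m : ℕ) : ℝ) ^ (-(C * (k : ℝ))) * (2 : ℝ) ^ (-(C * (k : ℝ) * (B : ℝ)))
            ≤ ∑ i, ∑ j, |A i j - G i j| ^ p := by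
  classical
  have hp0 : 0 < p := lt_of_lt_of_le (by norm_num) hp
  refine ⟨((4 * p : ℕ) : ℝ), by positivity, ?_⟩
  intro n m k B hn hm hk hB A hA hAbound hrankA G hrankG
  set s := k + 1 with hs
  have hsrank : s ≤ A.rank := hrankA
  -- sum dominates any single term
  have hterm : ∀ (i0 : Fin n) (j0 : Fin m),
      |A i0 j0 - G i0 j0| ^ p ≤ ∑ i, ∑ j, |A i j - G i j| ^ p := by
    intro i0 j0
    have h1 : |A i0 j0 - G i0 j0| ^ p ≤ ∑ j, |A i0 j - G i0 j| ^ p :=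
      Finset.single_le_sum (f := fun j => |A i0 j - G i0 j| ^ p)
        (fun j _ => by positivity) (Finset.mem_univ j0)
    exact h1.trans (Finset.single_le_sum (f := fun i => ∑ j, |A i j - G i j| ^ p)
      (fun i _ => by positivity) (Finset.mem_univ i0))
  -- rewrite the RHS with natural number exponents
  have hnm0 : (0:ℝ) ≤ ((n * m : ℕ) : ℝ) := by positivity
  have hnm1 : (1:ℝ) ≤ ((n * m : ℕ) : ℝ) := by
    have : 1 ≤ n * m := Nat.one_le_iff_ne_zero.mpr (Nat.mul_ne_zero (by omega) (by omega))
    exact_mod_cast this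
  have hrw : ((n * m : ℕ) : ℝ) ^ (-((((4 * p : ℕ) : ℝ)) * (k : ℝ)))
        * (2 : ℝ) ^ (-((((4 * p : ℕ) : ℝ)) * (k : ℝ) * (B : ℝ)))
      = (((n * m : ℕ) : ℝ) ^ (4 * p * k))⁻¹ * ((2:ℝ) ^ (4 * p * k * B))⁻¹ := by
    rw [show ((((4 * p : ℕ) : ℝ)) * (k : ℝ) * (B : ℝ)) = ((4 * p * k * B : ℕ) : ℝ) by
        push_cast; ring,
      show ((((4 * p : ℕ) : ℝ)) * (k : ℝ)) = ((4 * p * k : ℕ) : ℝ) by push_cast; ring,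
      Real.rpow_neg hnm0, Real.rpow_neg (by norm_num), Real.rpow_natCast, Real.rpow_natCast]
  rw [hrw]
  by_cases hcase : ∀ i j, |A i j - G i j| ≤ 1
  · -- main case: all entries of A - G are small, use the determinant argument
    obtain ⟨r, c, hdetA⟩ := exists_nonzero_minor A hsrank
    set M := A.submatrix r c with hM
    set N := G.submatrix r c with hN
    have hdetN : N.det = 0 := by
      by_contra hne
      have hu : IsUnit N := (Matrix.isUnit_iff_isUnit_det N).mpr (isUnit_iff_ne_zero.mpr hne)
      have hrN : N.rank = s := by
        rw [Matrix.rank_of_isUnit N hu, Fintype.card_fin]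
      have hle : N.rank ≤ k := le_trans (rank_submatrix_le' G r c) hrankG
      omega
    have h1det : (1:ℝ) ≤ |M.det| :=
      aux_one_le_abs_det M (fun i j => hA _ _) hdetA
    set a : ℝ := 2 ^ (B + 1) with haa
    have ha1 : (1:ℝ) ≤ a := one_le_pow₀ (by norm_num)
    have h2B1 : (1:ℝ) ≤ (2:ℝ) ^ B := one_le_pow₀ (by norm_num)
    have hMa : ∀ i j, |M i j| ≤ a := by
      intro i j
      refine (hAbound _ _).trans ?_
      rw [haa, pow_succ]
      nlinarith
    have hNa : ∀ i j, |N i j| ≤ a := by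
      intro i j
      have h1 : |N i j| ≤ |M i j| + |M i j - N i j| := by
        have := abs_sub_abs_le_abs_sub (N i j) (M i j)
        have h2 := abs_sub_comm (N i j) (M i j)
        calc |N i j| = |M i j + (N i j - M i j)| := by ring_nf
          _ ≤ |M i j| + |N i j - M i j| := abs_add_le _ _
          _ = |M i j| + |M i j - N i j| := by rw [abs_sub_comm]
      have h2 : |M i j - N i j| ≤ 1 := hcase _ _
      have h3 : |M i j| ≤ (2:ℝ) ^ B := hAbound _ _
      rw [haa, pow_succ]
      nlinarith
    set T := ∑ x : Fin s × Fin s, |M x.1 x.2 - N x.1 x.2| with hT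
    have hTnonneg : 0 ≤ T := Finset.sum_nonneg fun _ _ => abs_nonneg _
    have hdetle := aux_abs_det_sub_det_le M N a ha1 hMa hNa
    have h1T : (1:ℝ) ≤ (Nat.factorial s : ℝ) * (T * a ^ s) := by
      refine le_trans ?_ hdetle
      rw [hdetN, sub_zero]
      exact h1det
    -- extract a biggish entry
    have hss : (0:ℝ) < ((s * s : ℕ) : ℝ) := by
      have : 0 < s * s := Nat.mul_pos (by omega) (by omega)
      exact_mod_cast this
    have hx : ∃ x : Fin s × Fin s, T / ((s * s : ℕ) : ℝ) ≤ |M x.1 x.2 - N x.1 x.2| := by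
      have hne : (Finset.univ : Finset (Fin s × Fin s)).Nonempty := by
        refine Finset.univ_nonempty
      have hsum : ∑ _x : Fin s × Fin s, (T / ((s * s : ℕ) : ℝ))
          ≤ ∑ x : Fin s × Fin s, |M x.1 x.2 - N x.1 x.2| := by
        rw [Finset.sum_const, Finset.card_univ, Fintype.card_prod, Fintype.card_fin,
          nsmul_eq_mul]
        rw [show ((s * s : ℕ) : ℝ) = (s : ℝ) * (s : ℝ) by push_cast; ring] at hss ⊢
        rw [mul_div_cancel₀ _ (ne_of_gt hss)]
      obtain ⟨x, _, hx⟩ := Finset.exists_le_of_sum_le hne hsum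
      exact ⟨x, hx⟩
    obtain ⟨⟨i0, j0⟩, hx0⟩ := hx
    set y : ℝ := T / ((s * s : ℕ) : ℝ) with hy
    have hynonneg : 0 ≤ y := div_nonneg hTnonneg (le_of_lt hss)
    -- Q bound
    set Q : ℝ := (Nat.factorial s : ℝ) * a ^ s * ((s * s : ℕ) : ℝ) with hQ
    have hQpos : 0 < Q := by
      have h1 : (0:ℝ) < (Nat.factorial s : ℝ) := by
        exact_mod_cast Nat.factorial_pos s
      have h2 : (0:ℝ) < a ^ s := by positivity
      positivity
    have hssne : ((s * s : ℕ) : ℝ) ≠ 0 := ne_of_gt hss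
    have hyQ : Q⁻¹ ≤ y := by
      rw [← one_div, div_le_iff₀ hQpos]
      have hyq : y * Q = (Nat.factorial s : ℝ) * (T * a ^ s) := by
        rw [hy, hQ]; field_simp
      rw [hyq]; exact h1T
    -- bound Q by the final quantity
    have hsn : s ≤ n := by
      have := Matrix.rank_le_card_height A
      rw [Fintype.card_fin] at this
      omega
    have hsm : s ≤ m := by
      have := Matrix.rank_le_card_width A
      rw [Fintype.card_fin] at this
      omega
    have hQbound : Q ≤ ((n * m : ℕ) : ℝ) ^ (4 * k) * (2:ℝ) ^ (4 * k * B) := by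
      have hnat : s.factorial * 2 ^ ((B + 1) * s) * (s * s)
          ≤ (n * m) ^ (4 * k) * 2 ^ (4 * k * B) := by
        have e1 : s.factorial * 2 ^ ((B + 1) * s) * (s * s)
            ≤ s ^ (s + 2) * 2 ^ ((B + 1) * s) := by
          have h1 : s.factorial ≤ s ^ s := Nat.factorial_le_pow s
          calc s.factorial * 2 ^ ((B + 1) * s) * (s * s)
              ≤ s ^ s * 2 ^ ((B + 1) * s) * (s * s) :=
                Nat.mul_le_mul_right _ (Nat.mul_le_mul_right _ h1)
            _ = s ^ (s + 2) * 2 ^ ((B + 1) * s) := by ring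
        refine e1.trans ?_
        have hsnm : s ≤ n * m := le_trans hsn (Nat.le_mul_of_pos_right n (by omega))
        have e2 : s ^ (s + 2) ≤ (n * m) ^ (4 * k) := by
          calc s ^ (s + 2) ≤ (n * m) ^ (s + 2) := Nat.pow_le_pow_left hsnm _
            _ ≤ (n * m) ^ (4 * k) := Nat.pow_le_pow_right
                (Nat.one_le_iff_ne_zero.mpr (Nat.mul_ne_zero (by omega) (by omega))) (by omega)
        have e3 : 2 ^ ((B + 1) * s) ≤ 2 ^ (4 * k * B) := by
          refine Nat.pow_le_pow_right (by norm_num) ?_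
          calc (B + 1) * s ≤ (2 * B) * (2 * k) := Nat.mul_le_mul (by omega) (by omega)
            _ = 4 * k * B := by ring
        exact Nat.mul_le_mul e2 e3
      have hQcast : Q = ((s.factorial * 2 ^ ((B + 1) * s) * (s * s) : ℕ) : ℝ) := by
        rw [hQ, haa]
        push_cast
        rw [← pow_mul]
      rw [hQcast]
      calc ((s.factorial * 2 ^ ((B + 1) * s) * (s * s) : ℕ) : ℝ)
          ≤ (((n * m) ^ (4 * k) * 2 ^ (4 * k * B) : ℕ) : ℝ) := by exact_mod_cast hnat
        _ = ((n * m : ℕ) : ℝ) ^ (4 * k) * (2:ℝ) ^ (4 * k * B) := by push_cast; ring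
    have hQp : Q ^ p ≤ (((n * m : ℕ) : ℝ) ^ (4 * p * k)) * ((2:ℝ) ^ (4 * p * k * B)) := by
      calc Q ^ p ≤ (((n * m : ℕ) : ℝ) ^ (4 * k) * (2:ℝ) ^ (4 * k * B)) ^ p :=
            pow_le_pow_left₀ (le_of_lt hQpos) hQbound p
        _ = (((n * m : ℕ) : ℝ) ^ (4 * p * k)) * ((2:ℝ) ^ (4 * p * k * B)) := by
            rw [mul_pow, ← pow_mul, ← pow_mul,
              show 4 * k * p = 4 * p * k from by ring,
              show 4 * k * B * p = 4 * p * k * B from by ring]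
    have hfinal : (((n * m : ℕ) : ℝ) ^ (4 * p * k))⁻¹ * ((2:ℝ) ^ (4 * p * k * B))⁻¹
        ≤ y ^ p := by
      rw [← mul_inv]
      have h1 : (Q ^ p)⁻¹ ≤ y ^ p := by
        have h2 : Q⁻¹ ^ p ≤ y ^ p :=
          pow_le_pow_left₀ (inv_nonneg.mpr (le_of_lt hQpos)) hyQ p
        rwa [inv_pow] at h2
      refine le_trans ?_ h1
      exact inv_anti₀ (by positivity) hQp
    refine hfinal.trans ?_
    have hyle : y ≤ |A (r i0) (c j0) - G (r i0) (c j0)| := hx0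
    have hyp : y ^ p ≤ |A (r i0) (c j0) - G (r i0) (c j0)| ^ p :=
      pow_le_pow_left₀ hynonneg hyle p
    exact hyp.trans (hterm (r i0) (c j0))
  · push_neg at hcase
    obtain ⟨i0, j0, hgt⟩ := hcase
    have h1 : (((n * m : ℕ) : ℝ) ^ (4 * p * k))⁻¹ * ((2:ℝ) ^ (4 * p * k * B))⁻¹ ≤ 1 := by
      have ha : (((n * m : ℕ) : ℝ) ^ (4 * p * k))⁻¹ ≤ 1 := by
        rw [inv_le_one_iff₀]
        right
        exact one_le_pow₀ hnm1
      have hb : ((2:ℝ) ^ (4 * p * k * B))⁻¹ ≤ 1 := by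
        rw [inv_le_one_iff₀]
        right
        exact one_le_pow₀ (by norm_num)
      have hb0 : (0:ℝ) ≤ ((2:ℝ) ^ (4 * p * k * B))⁻¹ := by positivity
      calc (((n * m : ℕ) : ℝ) ^ (4 * p * k))⁻¹ * ((2:ℝ) ^ (4 * p * k * B))⁻¹
          ≤ 1 * 1 := mul_le_mul ha hb hb0 zero_le_one
        _ = 1 := by norm_num
    refine h1.trans ?_
    have h2 : (1:ℝ) ≤ |A i0 j0 - G i0 j0| ^ p := one_le_pow₀ hgt.le
    exact h2.trans (hterm i0 j0)
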